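/- Let ι be a finite index set, let k > 0 and ε > 0, let m : ι → ℝ satisfy m(i) > 0 for all i, and let w : ι → ι → ℝ satisfy w(i,j) = w(j,i) ≥ 0 for all i, j. Suppose u, v : ι → ℝ satisfy, for every i ∈ ι, (m(i)/k)(u(i) − v(i)) + Σ_{j∈ι} w(i,j)(u(i) − u(j)) + (m(i)/ε²)(u(i)³ − u(i)) = 0. If |v(i)| ≤ 1 for all i ∈ ι, then |u(i)| ≤ 1 for all i ∈ ι. -/
import Mathlib

open Finset

/-- Discrete maximum principle (Theorem 3.2) in nodal (graph) form: the modified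
fully implicit scheme for the Allen–Cahn equation preserves the bound `|u| ≤ 1`. -/
theorem stmt_8 (ι : Type*) [Fintype ι] (k ε : ℝ) (hk : 0 < k) (hε : 0 < ε)
    (m : ι → ℝ) (hm : ∀ i, 0 < m i)
    (w : ι → ι → ℝ) (hsymm : ∀ i j, w i j = w j i) (hnn : ∀ i j, 0 ≤ w i j)
    (u v : ι → ℝ)
    (hscheme : ∀ i, m i / k * (u i - v i) + (∑ j, w i j * (u i - u j))
      + m i / ε ^ 2 * ((u i) ^ 3 - u i) = 0)
    (hv : ∀ i, |v i| ≤ 1) :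
    ∀ i, |u i| ≤ 1 := by
  intro i
  obtain ⟨a, -, ha⟩ := Finset.exists_max_image Finset.univ u ⟨i, mem_univ i⟩
  obtain ⟨b, -, hb⟩ := Finset.exists_min_image Finset.univ u ⟨i, mem_univ i⟩
  rw [abs_le]
  constructor
  · have hub : -1 ≤ u b := by
      by_contra h
      push_neg at h
      have hs := hscheme b
      have hsum : ∑ j, w b j * (u b - u j) ≤ 0 :=
        Finset.sum_nonpos fun j _ =>
          mul_nonpos_of_nonneg_of_nonpos (hnn b j) (by linarith [hb j (mem_univ j)])
      have hvb := (abs_le.mp (hv b)).1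
      have h1 : 0 < m b / k := div_pos (hm b) hk
      have h2 : 0 < m b / ε ^ 2 := div_pos (hm b) (pow_pos hε 2)
      have hc : (u b) ^ 3 - u b < 0 := by nlinarith [mul_pos (mul_pos (by linarith : (0:ℝ) < -u b - 1) (by linarith : (0:ℝ) < 1 - u b)) (by linarith : (0:ℝ) < -u b)]
      nlinarith [mul_pos h1 (by linarith : (0:ℝ) < v b - u b), mul_pos h2 (by linarith : (0:ℝ) < u b - (u b)^3)]
    linarith [hb i (mem_univ i)]
  · have hua : u a ≤ 1 := by
      by_contra h
      push_neg at h
      have hs := hscheme a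
      have hsum : 0 ≤ ∑ j, w a j * (u a - u j) :=
        Finset.sum_nonneg fun j _ =>
          mul_nonneg (hnn a j) (by linarith [ha j (mem_univ j)])
      have hva := (abs_le.mp (hv a)).2
      have h1 : 0 < m a / k := div_pos (hm a) hk
      have h2 : 0 < m a / ε ^ 2 := div_pos (hm a) (pow_pos hε 2)
      have hc : 0 < (u a) ^ 3 - u a := by nlinarith [mul_pos (mul_pos (by linarith : (0:ℝ) < u a - 1) (by linarith : (0:ℝ) < u a + 1)) (by linarith : (0:ℝ) < u a)]
      nlinarith [mul_pos h1 (by linarith : (0:ℝ) < u a - v a), mul_pos h2 hc]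
    linarith [ha i (mem_univ i)]
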